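/- The number of signed permutations (ω,ε) of [n] with an even number of bars (i.e., ∏ε_i = 1), such that ω(1) ≠ n and all right-to-left maxima of (ω,ε) are unbarred, equals 1·3·5⋯(2n−3)·(n−1). -/

import Mathlib

open Finset

namespace TypeDAux

variable {n : ℕ}

/-- number of larger entries strictly to the right of position `i` -/
def code (ω : Equiv.Perm (Fin n)) (i : Fin n) : ℕ :=
  (univ.filter (fun j => i < j ∧ ω i < ω j)).card

lemma code_lt (ω : Equiv.Perm (Fin n)) (i : Fin n) : code ω i < n - i.val := by
  have h1 : (univ.filter (fun j => i < j ∧ ω i < ω j)) ⊆ Finset.Ioi i := by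
    intro j hj
    simp only [mem_filter] at hj
    simpa using hj.2.1
  have h2 := Finset.card_le_card h1
  rw [Fin.card_Ioi] at h2
  have h3 : code ω i ≤ n - 1 - i.val := h2
  have := i.isLt
  omega

lemma code_eq (ω : Equiv.Perm (Fin n)) (i : Fin n) :
    code ω i = (univ.filter (fun x => ω i < x ∧ ∀ k, k < i → ω k ≠ x)).card := by
  apply Finset.card_bij (fun j _ => ω j)
  · intro j hj
    simp only [mem_filter, mem_univ, true_and] at hj ⊢
    refine ⟨hj.2, fun k hk he => ?_⟩
    exact absurd (ω.injective he) (hk.trans hj.1).ne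
  · intro a ha b hb hab
    exact ω.injective hab
  · intro x hx
    simp only [mem_filter, mem_univ, true_and] at hx
    refine ⟨ω.symm x, ?_, by simp⟩
    simp only [mem_filter, mem_univ, true_and, Equiv.apply_symm_apply]
    refine ⟨?_, hx.1⟩
    rcases lt_trichotomy i (ω.symm x) with h | h | h
    · exact h
    · exfalso; have := hx.1; rw [h] at this; simp at this
    · exact absurd (by simp) (hx.2 _ h)

lemma code_injective (ω ω' : Equiv.Perm (Fin n)) (h : ∀ i, code ω i = code ω' i) : ω = ω' := by
  suffices h' : ∀ m : ℕ, ∀ hm : m < n, ω ⟨m, hm⟩ = ω' ⟨m, hm⟩ by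
    ext i
    have := h' i.val i.isLt
    simpa using congrArg Fin.val this
  intro m
  induction m using Nat.strong_induction_on with
  | _ m IH =>
    intro hm
    set i : Fin n := ⟨m, hm⟩ with hidef
    have hagree : ∀ k : Fin n, k < i → ω k = ω' k := by
      intro k hk
      have hkm : k.val < m := hk
      have := IH k.val hkm k.isLt
      simpa using this
    set T : Finset (Fin n) := univ.filter (fun x => ∀ k, k < i → ω k ≠ x) with hT
    have hwT : ω i ∈ T := by
      simp only [hT, mem_filter, mem_univ, true_and]
      exact fun k hk he => absurd (ω.injective he) hk.ne
    have hwT' : ω' i ∈ T := by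
      simp only [hT, mem_filter, mem_univ, true_and]
      intro k hk he
      rw [hagree k hk] at he
      exact absurd (ω'.injective he) hk.ne
    have hcode : ∀ a : Fin n, (T.filter (fun x => a < x)).card = (univ.filter (fun x => a < x ∧ ∀ k, k < i → ω k ≠ x)).card := by
      intro a
      congr 1
      ext x
      simp only [hT, mem_filter, mem_univ, true_and]
      tauto
    have h1 : code ω i = (T.filter (fun x => ω i < x)).card := by
      rw [code_eq, hcode]
    have h2 : code ω' i = (T.filter (fun x => ω' i < x)).card := by
      rw [code_eq, hcode]
      congr 1
      ext x
      simp only [mem_filter, mem_univ, true_and]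
      constructor
      · rintro ⟨hx1, hx2⟩
        exact ⟨hx1, fun k hk => (hagree k hk) ▸ hx2 k hk⟩
      · rintro ⟨hx1, hx2⟩
        exact ⟨hx1, fun k hk => (hagree k hk) ▸ hx2 k hk⟩
    have hmono : ∀ a b : Fin n, a < b → b ∈ T →
        (T.filter (fun x => b < x)).card < (T.filter (fun x => a < x)).card := by
      intro a b hab hbT
      apply Finset.card_lt_card
      constructor
      · intro x hx
        simp only [mem_filter] at hx ⊢
        exact ⟨hx.1, hab.trans hx.2⟩
      · intro hsub
        have := hsub (by simp only [mem_filter]; exact ⟨hbT, hab⟩)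
        simp only [mem_filter] at this
        exact absurd this.2 (lt_irrefl b)
    have hci := h i
    rw [h1, h2] at hci
    rcases lt_trichotomy (ω i) (ω' i) with hlt | heq | hlt
    · exact absurd hci (hmono _ _ hlt hwT').ne'
    · exact heq
    · exact absurd hci (hmono _ _ hlt hwT).ne

lemma code_eq_zero_iff (ω : Equiv.Perm (Fin n)) (i : Fin n) :
    code ω i = 0 ↔ ∀ j, i < j → ω j < ω i := by
  rw [code, Finset.card_eq_zero, Finset.filter_eq_empty_iff]
  constructor
  · intro h j hij
    have := h (mem_univ j)
    push_neg at this
    have hne : ω j ≠ ω i := fun he => absurd (ω.injective he) hij.ne'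
    exact lt_of_le_of_ne (this hij) hne
  · intro h j _
    rintro ⟨h1, h2⟩
    exact absurd (h j h1) (lt_asymm h2)

lemma zero_code (hn : 1 < n) (ω : Equiv.Perm (Fin n)) :
    ω ⟨0, by omega⟩ ≠ ⟨n - 1, by omega⟩ ↔ code ω ⟨0, by omega⟩ ≠ 0 := by
  refine not_congr ?_
  rw [code_eq_zero_iff]
  constructor
  swap
  · intro hall
    by_cases hj0 : ω.symm ⟨n - 1, by omega⟩ = ⟨0, by omega⟩
    · rw [← hj0]; simp
    · exfalso
      have h0j : (⟨0, by omega⟩ : Fin n) < ω.symm ⟨n - 1, by omega⟩ := by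
        have hne0 : (ω.symm ⟨n - 1, by omega⟩ : Fin n).val ≠ 0 := fun h => hj0 (Fin.ext h)
        simp only [Fin.lt_def, Fin.val_mk]
        omega
      have := hall _ h0j
      rw [Equiv.apply_symm_apply] at this
      have hle : (ω ⟨0, by omega⟩ : Fin n).val < n := (ω _).isLt
      rw [Fin.lt_def] at this
      simp only at this
      omega
  · intro hmax
    intro j hj
    rw [hmax]
    have hne : ω j ≠ ⟨n - 1, by omega⟩ := by
      rw [← hmax]; exact fun he => absurd (ω.injective he) hj.ne'
    refine lt_of_le_of_ne ?_ hne
    rw [Fin.le_def]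
    have := (ω j).isLt
    simp only
    omega

lemma card_units_int : Fintype.card ℤˣ = 2 := by decide

def F (p : Equiv.Perm (Fin n) × (Fin n → ℤˣ)) : (i : Fin n) → Fin (n - i.val) × ℤˣ :=
  fun i => (⟨code p.1 i, code_lt p.1 i⟩, p.2 i)

lemma F_bijective : Function.Bijective (F (n := n)) := by
  rw [Fintype.bijective_iff_injective_and_card]
  constructor
  · intro p q h
    have hcode : ∀ i, code p.1 i = code q.1 i := by
      intro i
      have := congrFun h i
      exact congrArg (fun x => (x.1 : ℕ)) this
    have h1 : p.1 = q.1 := code_injective _ _ hcode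
    have h2 : p.2 = q.2 := by
      funext i
      exact congrArg Prod.snd (congrFun h i)
    exact Prod.ext h1 h2
  · rw [Fintype.card_prod, Fintype.card_perm, Fintype.card_fun, Fintype.card_pi,
      Fintype.card_fin, card_units_int]
    have : ∀ i : Fin n, Fintype.card (Fin (n - i.val) × ℤˣ) = (n - i.val) * 2 := by
      intro i
      rw [Fintype.card_prod, Fintype.card_fin, card_units_int]
    rw [Finset.prod_congr rfl (fun i _ => this i), Finset.prod_mul_distrib,
      Finset.prod_const, Finset.card_univ, Fintype.card_fin]
    congr 1
    rw [Fin.prod_univ_eq_prod_range (fun k => n - k) n,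
      ← Finset.prod_range_add_one_eq_factorial n,
      ← Finset.prod_range_reflect (fun k => k + 1) n]
    apply Finset.prod_congr rfl
    intro k hk
    rw [Finset.mem_range] at hk
    clear * - hk
    omega

lemma prod_update_neg (ε : Fin n → ℤˣ) (i0 : Fin n) :
    (∏ i, Function.update ε i0 (-ε i0) i) = -∏ i, ε i := by
  rw [Finset.prod_update_of_mem (mem_univ i0), Finset.sdiff_singleton_eq_erase,
    ← Finset.mul_prod_erase univ ε (mem_univ i0), neg_mul]

lemma cardA (m : ℕ) (hm : 0 < m) :
    (univ.filter (fun x : Fin m × ℤˣ => (x.1 : ℕ) ≠ 0)).card = (m - 1) * 2 := by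
  have h1 : (univ.filter (fun x : Fin m × ℤˣ => (x.1 : ℕ) ≠ 0))
      = (univ.filter (fun c : Fin m => (c : ℕ) ≠ 0)) ×ˢ univ := by
    ext ⟨c, s⟩
    simp only [mem_filter, mem_univ, true_and, Finset.mem_product, and_true]
  rw [h1, Finset.card_product]
  have h2 : (univ.filter (fun c : Fin m => (c : ℕ) ≠ 0)) = univ.erase ⟨0, hm⟩ := by
    ext c
    simp [Fin.ext_iff]
  rw [h2, Finset.card_erase_of_mem (mem_univ _), card_univ, card_univ, Fintype.card_fin,
    card_units_int]

lemma cardB (m : ℕ) (hm : 0 < m) :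
    (univ.filter (fun x : Fin m × ℤˣ => (x.1 : ℕ) = 0 → x.2 = 1)).card = 2 * m - 1 := by
  have hkey := Finset.card_filter_add_card_filter_not
    (s := (univ : Finset (Fin m × ℤˣ))) (fun x => (x.1 : ℕ) = 0 → x.2 = 1)
  have hneg : (univ.filter (fun x : Fin m × ℤˣ => ¬((x.1 : ℕ) = 0 → x.2 = 1)))
      = {(⟨0, hm⟩, -1)} := by
    ext ⟨c, s⟩
    simp only [mem_filter, mem_univ, true_and, Finset.mem_singleton, Classical.not_imp,
      Prod.mk.injEq, Fin.ext_iff]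
    constructor
    · rintro ⟨h1, h2⟩
      rcases Int.units_eq_one_or s with rfl | rfl
      · exact absurd rfl h2
      · exact ⟨h1, rfl⟩
    · rintro ⟨h1, rfl⟩
      exact ⟨h1, by decide⟩
  rw [hneg, Finset.card_singleton, card_univ, Fintype.card_prod, Fintype.card_fin,
    card_units_int] at hkey
  omega

end TypeDAux

open TypeDAux

/-- The number of even-signed permutations `(ω,ε) ∈ D_n` (i.e. `∏ εᵢ = 1`) with
`ω(1) ≠ n` and all right-to-left maxima unbarred equals
`1·3·5⋯(2n-3)·(n-1)`. -/
theorem card_typeD_perms_rtl_max_unbarred {n : ℕ} (hn : 2 ≤ n) :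
    ((Finset.univ : Finset (Equiv.Perm (Fin n) × (Fin n → ℤˣ))).filter
        (fun p => (∏ i, p.2 i) = 1 ∧
          p.1 ⟨0, by omega⟩ ≠ ⟨n - 1, by omega⟩ ∧
          ∀ i : Fin n, (∀ j : Fin n, i < j → p.1 j < p.1 i) → p.2 i = 1)).card
      = (∏ k ∈ Finset.range (n - 1), (2 * k + 1)) * (n - 1) := by
  obtain ⟨m, rfl⟩ : ∃ m, n = m + 2 := ⟨n - 2, by omega⟩
  have hsplit := Finset.card_filter_add_card_filter_not
      (s := univ.filter (fun p : Equiv.Perm (Fin (m + 2)) × (Fin (m + 2) → ℤˣ) =>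
      p.1 ⟨0, Nat.succ_pos (m+1)⟩ ≠ ⟨m + 2 - 1, Nat.sub_lt (Nat.succ_pos (m+1)) Nat.one_pos⟩ ∧
      ∀ i : Fin (m + 2), (∀ j : Fin (m + 2), i < j → p.1 j < p.1 i) → p.2 i = 1)) (p := fun p : Equiv.Perm (Fin (m + 2)) × (Fin (m + 2) → ℤˣ) =>
        (∏ i, p.2 i) = 1)
  have heq1 : (univ.filter (fun p : Equiv.Perm (Fin (m + 2)) × (Fin (m + 2) → ℤˣ) =>
      p.1 ⟨0, Nat.succ_pos (m+1)⟩ ≠ ⟨m + 2 - 1, Nat.sub_lt (Nat.succ_pos (m+1)) Nat.one_pos⟩ ∧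
      ∀ i : Fin (m + 2), (∀ j : Fin (m + 2), i < j → p.1 j < p.1 i) → p.2 i = 1)).filter (fun p : Equiv.Perm (Fin (m + 2)) × (Fin (m + 2) → ℤˣ) => (∏ i, p.2 i) = 1)
      = (Finset.univ : Finset (Equiv.Perm (Fin (m + 2)) × (Fin (m + 2) → ℤˣ))).filter
        (fun p : Equiv.Perm (Fin (m + 2)) × (Fin (m + 2) → ℤˣ) =>
      (∏ i, p.2 i) = 1 ∧
      p.1 ⟨0, Nat.succ_pos (m+1)⟩ ≠ ⟨m + 2 - 1, Nat.sub_lt (Nat.succ_pos (m+1)) Nat.one_pos⟩ ∧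
      ∀ i : Fin (m + 2), (∀ j : Fin (m + 2), i < j → p.1 j < p.1 i) → p.2 i = 1) := by
    ext p
    simp only [mem_filter, mem_univ, true_and]
    tauto
  have hQflip : ∀ p : Equiv.Perm (Fin (m + 2)) × (Fin (m + 2) → ℤˣ),
      (fun p : Equiv.Perm (Fin (m + 2)) × (Fin (m + 2) → ℤˣ) =>
      p.1 ⟨0, Nat.succ_pos (m+1)⟩ ≠ ⟨m + 2 - 1, Nat.sub_lt (Nat.succ_pos (m+1)) Nat.one_pos⟩ ∧
      ∀ i : Fin (m + 2), (∀ j : Fin (m + 2), i < j → p.1 j < p.1 i) → p.2 i = 1) p →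
      (fun p : Equiv.Perm (Fin (m + 2)) × (Fin (m + 2) → ℤˣ) =>
      p.1 ⟨0, Nat.succ_pos (m+1)⟩ ≠ ⟨m + 2 - 1, Nat.sub_lt (Nat.succ_pos (m+1)) Nat.one_pos⟩ ∧
      ∀ i : Fin (m + 2), (∀ j : Fin (m + 2), i < j → p.1 j < p.1 i) → p.2 i = 1) (p.1, Function.update p.2 (⟨0, Nat.succ_pos (m+1)⟩ : Fin (m + 2)) (-p.2 (⟨0, Nat.succ_pos (m+1)⟩ : Fin (m + 2)))) := by
    rintro ⟨ω, ε⟩ ⟨h1, h2⟩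
    refine ⟨h1, ?_⟩
    intro i hi
    by_cases hii : i = (⟨0, Nat.succ_pos (m+1)⟩ : Fin (m + 2))
    · subst hii
      exact absurd ((code_eq_zero_iff ω (⟨0, Nat.succ_pos (m+1)⟩ : Fin (m + 2))).mpr hi) ((zero_code (by omega) ω).mp h1)
    · simp only [Function.update_of_ne hii]
      exact h2 i hi
  have hinv : ∀ ε : Fin (m + 2) → ℤˣ,
      Function.update (Function.update ε (⟨0, Nat.succ_pos (m+1)⟩ : Fin (m + 2)) (-ε (⟨0, Nat.succ_pos (m+1)⟩ : Fin (m + 2)))) (⟨0, Nat.succ_pos (m+1)⟩ : Fin (m + 2))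
        (-(Function.update ε (⟨0, Nat.succ_pos (m+1)⟩ : Fin (m + 2)) (-ε (⟨0, Nat.succ_pos (m+1)⟩ : Fin (m + 2))) (⟨0, Nat.succ_pos (m+1)⟩ : Fin (m + 2)))) = ε := by
    intro ε
    rw [Function.update_self, Function.update_idem, neg_neg, Function.update_eq_self]
  have hbij : ((univ.filter (fun p : Equiv.Perm (Fin (m + 2)) × (Fin (m + 2) → ℤˣ) =>
      p.1 ⟨0, Nat.succ_pos (m+1)⟩ ≠ ⟨m + 2 - 1, Nat.sub_lt (Nat.succ_pos (m+1)) Nat.one_pos⟩ ∧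
      ∀ i : Fin (m + 2), (∀ j : Fin (m + 2), i < j → p.1 j < p.1 i) → p.2 i = 1)).filter (fun p : Equiv.Perm (Fin (m + 2)) × (Fin (m + 2) → ℤˣ) => ¬(∏ i, p.2 i) = 1)).card
      = ((univ.filter (fun p : Equiv.Perm (Fin (m + 2)) × (Fin (m + 2) → ℤˣ) =>
      p.1 ⟨0, Nat.succ_pos (m+1)⟩ ≠ ⟨m + 2 - 1, Nat.sub_lt (Nat.succ_pos (m+1)) Nat.one_pos⟩ ∧
      ∀ i : Fin (m + 2), (∀ j : Fin (m + 2), i < j → p.1 j < p.1 i) → p.2 i = 1)).filter (fun p : Equiv.Perm (Fin (m + 2)) × (Fin (m + 2) → ℤˣ) => (∏ i, p.2 i) = 1)).card := by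
    apply Finset.card_nbij' (fun p => (p.1, Function.update p.2 (⟨0, Nat.succ_pos (m+1)⟩ : Fin (m + 2)) (-p.2 (⟨0, Nat.succ_pos (m+1)⟩ : Fin (m + 2)))))
      (fun p => (p.1, Function.update p.2 (⟨0, Nat.succ_pos (m+1)⟩ : Fin (m + 2)) (-p.2 (⟨0, Nat.succ_pos (m+1)⟩ : Fin (m + 2)))))
    · intro p hp
      simp only [Finset.mem_coe, mem_filter, mem_univ, true_and] at hp ⊢
      refine ⟨hQflip p hp.1, ?_⟩
      rcases Int.units_eq_one_or (∏ i, p.2 i) with h | h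
      · exact absurd h hp.2
      · show (∏ i, Function.update p.2 (⟨0, Nat.succ_pos (m+1)⟩ : Fin (m + 2)) (-p.2 (⟨0, Nat.succ_pos (m+1)⟩ : Fin (m + 2))) i) = 1
        rw [prod_update_neg, h, neg_neg]
    · intro p hp
      simp only [Finset.mem_coe, mem_filter, mem_univ, true_and] at hp ⊢
      refine ⟨hQflip p hp.1, ?_⟩
      show ¬(∏ i, Function.update p.2 (⟨0, Nat.succ_pos (m+1)⟩ : Fin (m + 2)) (-p.2 (⟨0, Nat.succ_pos (m+1)⟩ : Fin (m + 2))) i) = 1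
      rw [prod_update_neg, hp.2]
      decide
    · intro p hp
      exact Prod.ext rfl (hinv p.2)
    · intro p hp
      exact Prod.ext rfl (hinv p.2)
  have htrans : (univ.filter (fun p : Equiv.Perm (Fin (m + 2)) × (Fin (m + 2) → ℤˣ) =>
      p.1 ⟨0, Nat.succ_pos (m+1)⟩ ≠ ⟨m + 2 - 1, Nat.sub_lt (Nat.succ_pos (m+1)) Nat.one_pos⟩ ∧
      ∀ i : Fin (m + 2), (∀ j : Fin (m + 2), i < j → p.1 j < p.1 i) → p.2 i = 1)).card
      = (univ.filter (fun f : (i : Fin (m + 2)) → Fin (m + 2 - i.val) × ℤˣ =>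
          ((f (⟨0, Nat.succ_pos (m+1)⟩ : Fin (m + 2))).1 : ℕ) ≠ 0 ∧ ∀ i, ((f i).1 : ℕ) = 0 → (f i).2 = 1)).card := by
    apply Finset.card_equiv (Equiv.ofBijective F F_bijective)
    intro p
    simp only [mem_filter, mem_univ, true_and, Equiv.ofBijective_apply]
    constructor
    · rintro ⟨h1, h2⟩
      refine ⟨(zero_code (by omega) p.1).mp h1, ?_⟩
      intro i hi
      exact h2 i ((code_eq_zero_iff p.1 i).mp hi)
    · rintro ⟨h1, h2⟩
      exact ⟨(zero_code (by omega) p.1).mpr h1,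
        fun i hi => h2 i ((code_eq_zero_iff p.1 i).mpr hi)⟩
  have hpi : (univ.filter (fun f : (i : Fin (m + 2)) → Fin (m + 2 - i.val) × ℤˣ =>
          ((f (⟨0, Nat.succ_pos (m+1)⟩ : Fin (m + 2))).1 : ℕ) ≠ 0 ∧ ∀ i, ((f i).1 : ℕ) = 0 → (f i).2 = 1))
      = Fintype.piFinset (fun i : Fin (m + 2) =>
          if i = (⟨0, Nat.succ_pos (m+1)⟩ : Fin (m + 2)) then univ.filter (fun x : Fin (m + 2 - i.val) × ℤˣ => (x.1 : ℕ) ≠ 0)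
          else univ.filter (fun x : Fin (m + 2 - i.val) × ℤˣ =>
            (x.1 : ℕ) = 0 → x.2 = 1)) := by
    ext f
    simp only [mem_filter, mem_univ, true_and, Fintype.mem_piFinset]
    constructor
    · rintro ⟨h1, h2⟩ i
      by_cases hii : i = (⟨0, Nat.succ_pos (m+1)⟩ : Fin (m + 2))
      · subst hii
        simp only [eq_self_iff_true, if_true, if_pos, mem_filter, mem_univ, true_and]
        exact h1
      · simp only [if_neg hii, mem_filter, mem_univ, true_and]
        exact h2 i
    · intro h
      constructor
      · have := h (⟨0, Nat.succ_pos (m+1)⟩ : Fin (m + 2))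
        rw [if_pos rfl] at this
        simp only [mem_filter, mem_univ, true_and] at this
        exact this
      · intro i hi
        by_cases hii : i = (⟨0, Nat.succ_pos (m+1)⟩ : Fin (m + 2))
        · subst hii
          have := h (⟨0, Nat.succ_pos (m+1)⟩ : Fin (m + 2))
          rw [if_pos rfl] at this
          simp only [mem_filter, mem_univ, true_and] at this
          exact absurd hi this
        · have := h i
          rw [if_neg hii] at this
          simp only [mem_filter, mem_univ, true_and] at this
          exact this hi
  have h00 : (0 : Fin (m + 2)) = (⟨0, Nat.succ_pos (m+1)⟩ : Fin (m + 2)) := rfl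
  have hne0 : ∀ i : Fin (m + 1), i.succ ≠ (⟨0, Nat.succ_pos (m+1)⟩ : Fin (m + 2)) := by
    intro i h
    have := congrArg Fin.val h
    simp [Fin.val_succ] at this
  have hfirst : ((if (0 : Fin (m + 2)) = (⟨0, Nat.succ_pos (m+1)⟩ : Fin (m + 2))
        then univ.filter (fun x : Fin (m + 2 - ((0 : Fin (m + 2))).val) × ℤˣ => (x.1 : ℕ) ≠ 0)
        else univ.filter (fun x : Fin (m + 2 - ((0 : Fin (m + 2))).val) × ℤˣ =>
          (x.1 : ℕ) = 0 → x.2 = 1))).card = (m + 1) * 2 := by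
    rw [if_pos h00, cardA _ (Nat.sub_pos_of_lt (Fin.isLt _))]
    simp
  have htail : ∀ i : Fin (m + 1), ((if i.succ = (⟨0, Nat.succ_pos (m+1)⟩ : Fin (m + 2))
        then univ.filter (fun x : Fin (m + 2 - (i.succ : Fin (m + 2)).val) × ℤˣ =>
          (x.1 : ℕ) ≠ 0)
        else univ.filter (fun x : Fin (m + 2 - (i.succ : Fin (m + 2)).val) × ℤˣ =>
          (x.1 : ℕ) = 0 → x.2 = 1))).card = 2 * (m + 1 - i.val) - 1 := by
    intro i
    rw [if_neg (hne0 i), cardB _ (Nat.sub_pos_of_lt (Fin.isLt _))]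
    have hlt := i.isLt
    clear * - hlt
    simp only [Fin.val_succ]
    omega
  have hprod : (∏ i : Fin (m + 2), ((if i = (⟨0, Nat.succ_pos (m+1)⟩ : Fin (m + 2))
        then univ.filter (fun x : Fin (m + 2 - i.val) × ℤˣ => (x.1 : ℕ) ≠ 0)
        else univ.filter (fun x : Fin (m + 2 - i.val) × ℤˣ =>
          (x.1 : ℕ) = 0 → x.2 = 1))).card)
      = (m + 1) * 2 * ∏ k ∈ Finset.range (m + 1), (2 * k + 1) := by
    rw [Fin.prod_univ_succ, hfirst, Finset.prod_congr rfl (fun i _ => htail i)]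
    congr 1
    rw [Fin.prod_univ_eq_prod_range (fun k => 2 * (m + 1 - k) - 1) (m + 1),
      ← Finset.prod_range_reflect (fun k => 2 * k + 1) (m + 1)]
    apply Finset.prod_congr rfl
    intro k hk
    rw [Finset.mem_range] at hk
    clear * - hk
    omega
  have hdouble : 2 * ((Finset.univ : Finset (Equiv.Perm (Fin (m + 2)) × (Fin (m + 2) → ℤˣ))).filter
        (fun p : Equiv.Perm (Fin (m + 2)) × (Fin (m + 2) → ℤˣ) =>
      (∏ i, p.2 i) = 1 ∧
      p.1 ⟨0, Nat.succ_pos (m+1)⟩ ≠ ⟨m + 2 - 1, Nat.sub_lt (Nat.succ_pos (m+1)) Nat.one_pos⟩ ∧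
      ∀ i : Fin (m + 2), (∀ j : Fin (m + 2), i < j → p.1 j < p.1 i) → p.2 i = 1)).card
      = (univ.filter (fun p : Equiv.Perm (Fin (m + 2)) × (Fin (m + 2) → ℤˣ) =>
      p.1 ⟨0, Nat.succ_pos (m+1)⟩ ≠ ⟨m + 2 - 1, Nat.sub_lt (Nat.succ_pos (m+1)) Nat.one_pos⟩ ∧
      ∀ i : Fin (m + 2), (∀ j : Fin (m + 2), i < j → p.1 j < p.1 i) → p.2 i = 1)).card := by
    have h1 := congrArg Finset.card heq1
    clear * - hsplit hbij h1
    omega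
  have hfinal : 2 * ((Finset.univ : Finset (Equiv.Perm (Fin (m + 2)) × (Fin (m + 2) → ℤˣ))).filter
        (fun p : Equiv.Perm (Fin (m + 2)) × (Fin (m + 2) → ℤˣ) =>
      (∏ i, p.2 i) = 1 ∧
      p.1 ⟨0, Nat.succ_pos (m+1)⟩ ≠ ⟨m + 2 - 1, Nat.sub_lt (Nat.succ_pos (m+1)) Nat.one_pos⟩ ∧
      ∀ i : Fin (m + 2), (∀ j : Fin (m + 2), i < j → p.1 j < p.1 i) → p.2 i = 1)).card
      = 2 * ((∏ k ∈ Finset.range (m + 1), (2 * k + 1)) * (m + 1)) := by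
    rw [hdouble, htrans, hpi, Fintype.card_piFinset, hprod]
    ring
  have hres := Nat.eq_of_mul_eq_mul_left (by norm_num : 0 < 2) hfinal
  have hgoal : (∏ k ∈ Finset.range (m + 2 - 1), (2 * k + 1)) * (m + 2 - 1)
      = (∏ k ∈ Finset.range (m + 1), (2 * k + 1)) * (m + 1) := rfl
  rw [hgoal]
  exact hres
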